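/- Let G be a finite connected split graph and let D_s and D_t be two distance-2 dominating sets of G with |D_s| = |D_t|. Then every TS-sequence in G from D_s to D_t has length at least M*_TS(G,D_s,D_t), and there exists a TS-sequence in G from D_s to D_t of length at most M*_TS(G,D_s,D_t) + 2. -/
import Mathlib

/-- `D` is a distance-`r` dominating set of `G`. -/
def IsDrDS {V : Type*} (G : SimpleGraph V) (r : ℕ) (D : Set V) : Prop :=
  ∀ v : V, ∃ u ∈ D, G.Reachable u v ∧ G.dist u v ≤ r

/-- A TS-sequence of length `q` of distance-`r` dominating sets of `G`. -/
def IsTSSeq {V : Type*} (G : SimpleGraph V) (r q : ℕ)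
    (Dseq : Fin (q + 1) → Finset V) : Prop :=
  (∀ i, IsDrDS G r ↑(Dseq i)) ∧
  ∀ i : Fin q, ∃ x ∈ Dseq i.castSucc, ∃ y, y ∉ Dseq i.castSucc ∧ G.Adj x y ∧
    (↑(Dseq i.succ) : Set V) = (↑(Dseq i.castSucc) \ {x}) ∪ {y}

/-- `M*_TS(G, Ds, Dt)`: the minimum over all bijections `f : Ds → Dt` of
`∑_{s ∈ Ds} dist_G(s, f s)`. -/
noncomputable def MstarTS {V : Type*} (G : SimpleGraph V) (Ds Dt : Finset V) : ℕ :=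
  sInf {m | ∃ f : ↥Ds ≃ ↥Dt, m = ∑ s : ↥Ds, G.dist (s : V) ((f s : V))}

namespace TSAux

variable {V : Type*} [DecidableEq V]

/-- the cost of a matching -/
noncomputable def cost (G : SimpleGraph V) {A B : Finset V} (f : ↥A ≃ ↥B) : ℕ :=
  ∑ s : ↥A, G.dist (s : V) ((f s : V))

lemma mstar_eq (G : SimpleGraph V) (A B : Finset V) :
    MstarTS G A B = sInf {m | ∃ f : ↥A ≃ ↥B, m = cost G f} := rfl

lemma costSet_nonempty (G : SimpleGraph V) {A B : Finset V} (h : A.card = B.card) :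
    {m | ∃ f : ↥A ≃ ↥B, m = cost G f}.Nonempty := by
  have e : ↥A ≃ ↥B := Fintype.equivOfCardEq (by simp [Fintype.card_coe, h])
  exact ⟨cost G e, e, rfl⟩

lemma mstar_le_cost (G : SimpleGraph V) {A B : Finset V} (f : ↥A ≃ ↥B) :
    MstarTS G A B ≤ cost G f := Nat.sInf_le ⟨f, rfl⟩

lemma exists_cost_eq_mstar (G : SimpleGraph V) {A B : Finset V} (h : A.card = B.card) :
    ∃ f : ↥A ≃ ↥B, cost G f = MstarTS G A B := by
  obtain ⟨f, hf⟩ := Nat.sInf_mem (costSet_nonempty G h)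
  exact ⟨f, hf.symm⟩

/-- the new position set after sliding a token from `x` to `y` -/
def moveSet (A : Finset V) (x y : V) : Finset V := insert y (A.erase x)

lemma moveSet_coe {A : Finset V} {x y : V} (hx : x ∈ A) (_ : y ∉ A) :
    (↑(moveSet A x y) : Set V) = (↑A \ {x}) ∪ {y} := by
  simp only [moveSet, Finset.coe_insert, Finset.coe_erase]
  rw [Set.union_comm]
  rfl

lemma moveSet_card {A : Finset V} {x y : V} (hx : x ∈ A) (hy : y ∉ A) :
    (moveSet A x y).card = A.card := by
  rw [moveSet, Finset.card_insert_of_notMem (fun h => hy (Finset.mem_of_mem_erase h)),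
    Finset.card_erase_of_mem hx]
  have : 1 ≤ A.card := Finset.card_pos.2 ⟨x, hx⟩
  omega

lemma mem_moveSet_self {A : Finset V} (x : V) (y : V) : y ∈ moveSet A x y :=
  Finset.mem_insert_self _ _

lemma mem_moveSet_of_mem {A : Finset V} {x y a : V} (ha : a ∈ A) (hne : a ≠ x) :
    a ∈ moveSet A x y := Finset.mem_insert_of_mem (Finset.mem_erase.2 ⟨hne, ha⟩)

lemma mem_moveSet_elim {A : Finset V} {x y a : V} (ha : a ∈ moveSet A x y) :
    a = y ∨ (a ∈ A ∧ a ≠ x) := by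
  rcases Finset.mem_insert.1 ha with h | h
  · exact Or.inl h
  · exact Or.inr ⟨Finset.mem_of_mem_erase h, (Finset.mem_erase.1 h).1⟩

lemma notMem_moveSet {A : Finset V} {x y a : V} (ha : a ∉ A) (hay : a ≠ y) :
    a ∉ moveSet A x y := by
  intro h
  rcases mem_moveSet_elim h with h | h
  · exact hay h
  · exact ha h.1

/-- the equivalence between `A` and `moveSet A x y` -/
def moveEquiv {A : Finset V} {x y : V} (hx : x ∈ A) (hy : y ∉ A) :
    ↥A ≃ ↥(moveSet A x y) where
  toFun a := if h : (a : V) = x then ⟨y, mem_moveSet_self x y⟩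
    else ⟨a, mem_moveSet_of_mem a.2 h⟩
  invFun b := if h : (b : V) = y then ⟨x, hx⟩
    else ⟨b, ((mem_moveSet_elim b.2).resolve_left h).1⟩
  left_inv := by
    rintro ⟨a, ha⟩
    by_cases h : a = x
    · subst h
      simp
    · have hay : a ≠ y := fun hc => hy (hc ▸ ha)
      simp only [dif_neg h, dif_neg hay]
  right_inv := by
    rintro ⟨b, hb⟩
    by_cases h : b = y
    · subst h
      simp
    · have hbx : b ≠ x := ((mem_moveSet_elim hb).resolve_left h).2
      simp only [dif_neg h, dif_neg hbx]

lemma moveEquiv_coe_of_ne {A : Finset V} {x y : V} (hx : x ∈ A) (hy : y ∉ A)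
    (a : ↥A) (h : (a : V) ≠ x) : ((moveEquiv hx hy a : ↥(moveSet A x y)) : V) = a := by
  simp [moveEquiv, dif_neg h]

lemma moveEquiv_coe_of_eq {A : Finset V} {x y : V} (hx : x ∈ A) (hy : y ∉ A)
    (a : ↥A) (h : (a : V) = x) : ((moveEquiv hx hy a : ↥(moveSet A x y)) : V) = y := by
  simp [moveEquiv, dif_pos h]

/-- slide the token at `x` to `y`, retargeting the new token at `y` to the old target of `x`. -/
noncomputable def slideEquiv (G : SimpleGraph V) {A B : Finset V} (f : ↥A ≃ ↥B) {x y : V}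
    (hx : x ∈ A) (hy : y ∉ A) : ↥(moveSet A x y) ≃ ↥B :=
  (moveEquiv hx hy).symm.trans f

lemma moveEquiv_symm_coe_of_ne {A : Finset V} {x y : V} (hx : x ∈ A) (hy : y ∉ A)
    (b : ↥(moveSet A x y)) (h : (b : V) ≠ y) :
    (((moveEquiv hx hy).symm b : ↥A) : V) = b := by
  by_cases hax : (((moveEquiv hx hy).symm b : ↥A) : V) = x
  · exfalso
    have h2 := congrArg Subtype.val ((moveEquiv hx hy).apply_symm_apply b)
    rw [moveEquiv_coe_of_eq hx hy _ hax] at h2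
    exact h h2.symm
  · have h2 := congrArg Subtype.val ((moveEquiv hx hy).apply_symm_apply b)
    rw [moveEquiv_coe_of_ne hx hy _ hax] at h2
    exact h2

lemma moveEquiv_symm_coe_of_eq {A : Finset V} {x y : V} (hx : x ∈ A) (hy : y ∉ A)
    (b : ↥(moveSet A x y)) (h : (b : V) = y) :
    (((moveEquiv hx hy).symm b : ↥A) : V) = x := by
  by_contra hax
  have h2 := congrArg Subtype.val ((moveEquiv hx hy).apply_symm_apply b)
  rw [moveEquiv_coe_of_ne hx hy _ hax] at h2
  rw [h] at h2
  exact hy (h2 ▸ ((moveEquiv hx hy).symm b).2)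

lemma slideEquiv_apply_of_ne (G : SimpleGraph V) {A B : Finset V} (f : ↥A ≃ ↥B) {x y : V}
    (hx : x ∈ A) (hy : y ∉ A) (b : ↥(moveSet A x y)) (h : (b : V) ≠ y) :
    (slideEquiv G f hx hy b : V) = (f ⟨b, ((mem_moveSet_elim b.2).resolve_left h).1⟩ : V) := by
  simp only [slideEquiv, Equiv.trans_apply]
  congr 2
  exact Subtype.ext (moveEquiv_symm_coe_of_ne hx hy b h)

lemma slideEquiv_apply_of_eq (G : SimpleGraph V) {A B : Finset V} (f : ↥A ≃ ↥B) {x y : V}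
    (hx : x ∈ A) (hy : y ∉ A) (b : ↥(moveSet A x y)) (h : (b : V) = y) :
    (slideEquiv G f hx hy b : V) = (f ⟨x, hx⟩ : V) := by
  simp only [slideEquiv, Equiv.trans_apply]
  congr 2
  exact Subtype.ext (moveEquiv_symm_coe_of_eq hx hy b h)

lemma cost_slideEquiv (G : SimpleGraph V) {A B : Finset V} (f : ↥A ≃ ↥B) {x y : V}
    (hx : x ∈ A) (hy : y ∉ A) :
    cost G (slideEquiv G f hx hy) + G.dist x (f ⟨x, hx⟩ : V)
      = cost G f + G.dist y (f ⟨x, hx⟩ : V) := by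
  classical
  have key : cost G (slideEquiv G f hx hy)
      = ∑ a : ↥A, G.dist ((moveEquiv hx hy a : ↥(moveSet A x y)) : V) ((f a : V)) := by
    unfold cost
    rw [← Equiv.sum_comp (moveEquiv hx hy)
      (fun b => G.dist (b : V) ((slideEquiv G f hx hy b : V)))]
    apply Finset.sum_congr rfl
    intro a _
    congr 1
    simp only [slideEquiv, Equiv.trans_apply, Equiv.symm_apply_apply]
  rw [key]
  unfold cost
  rw [Finset.sum_eq_sum_sdiff_singleton_add (Finset.mem_univ (⟨x, hx⟩ : ↥A))
      (fun a => G.dist ((moveEquiv hx hy a : ↥(moveSet A x y)) : V) ((f a : V))),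
    Finset.sum_eq_sum_sdiff_singleton_add (Finset.mem_univ (⟨x, hx⟩ : ↥A))
      (fun a => G.dist (a : V) ((f a : V)))]
  have h1 : ∀ a ∈ Finset.univ \ {(⟨x, hx⟩ : ↥A)},
      G.dist ((moveEquiv hx hy a : ↥(moveSet A x y)) : V) ((f a : V))
        = G.dist (a : V) ((f a : V)) := by
    intro a ha
    have : a ≠ ⟨x, hx⟩ := by simpa using (Finset.mem_sdiff.1 ha).2
    have hax : (a : V) ≠ x := fun hc => this (Subtype.ext hc)
    rw [moveEquiv_coe_of_ne hx hy a hax]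
  rw [Finset.sum_congr rfl h1, moveEquiv_coe_of_eq hx hy _ rfl]
  ring

/-- swap the targets of the tokens at `a` and `b`. -/
def swapEquiv {A B : Finset V} (f : ↥A ≃ ↥B) (a b : ↥A) : ↥A ≃ ↥B :=
  (Equiv.swap a b).trans f

lemma swapEquiv_apply_left {A B : Finset V} (f : ↥A ≃ ↥B) (a b : ↥A) :
    swapEquiv f a b a = f b := by simp [swapEquiv]

lemma swapEquiv_apply_right {A B : Finset V} (f : ↥A ≃ ↥B) (a b : ↥A) :
    swapEquiv f a b b = f a := by simp [swapEquiv]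

lemma swapEquiv_apply_of_ne {A B : Finset V} (f : ↥A ≃ ↥B) (a b c : ↥A)
    (h1 : c ≠ a) (h2 : c ≠ b) : swapEquiv f a b c = f c := by
  simp [swapEquiv, Equiv.swap_apply_of_ne_of_ne h1 h2]

lemma cost_swapEquiv (G : SimpleGraph V) {A B : Finset V} (f : ↥A ≃ ↥B) (a b : ↥A)
    (hab : a ≠ b) :
    cost G (swapEquiv f a b) + G.dist (a : V) (f a : V) + G.dist (b : V) (f b : V)
      = cost G f + G.dist (a : V) (f b : V) + G.dist (b : V) (f a : V) := by
  classical
  unfold cost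
  rw [Finset.sum_eq_sum_sdiff_singleton_add (Finset.mem_univ a)
      (fun c => G.dist (c : V) ((swapEquiv f a b c : V))),
    Finset.sum_eq_sum_sdiff_singleton_add (Finset.mem_univ a)
      (fun c => G.dist (c : V) ((f c : V)))]
  have hb1 : b ∈ Finset.univ \ {a} := by simp [hab.symm]
  rw [Finset.sum_eq_sum_sdiff_singleton_add hb1
      (fun c => G.dist (c : V) ((swapEquiv f a b c : V))),
    Finset.sum_eq_sum_sdiff_singleton_add hb1
      (fun c => G.dist (c : V) ((f c : V)))]
  have h1 : ∀ c ∈ (Finset.univ \ {a}) \ {b},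
      G.dist (c : V) ((swapEquiv f a b c : V)) = G.dist (c : V) ((f c : V)) := by
    intro c hc
    have hca : c ≠ a := by
      have := (Finset.mem_sdiff.1 (Finset.mem_sdiff.1 hc).1).2; simpa using this
    have hcb : c ≠ b := by have := (Finset.mem_sdiff.1 hc).2; simpa using this
    rw [swapEquiv_apply_of_ne f a b c hca hcb]
  rw [Finset.sum_congr rfl h1, swapEquiv_apply_left, swapEquiv_apply_right]
  ring

end TSAux
section Part2
namespace TSAux

variable {V : Type*} [DecidableEq V] {G : SimpleGraph V}

set_option linter.unusedSectionVars false

lemma exists_optimal_normalized (hconn : G.Connected) {A B : Finset V}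
    (h : A.card = B.card) :
    ∃ f : ↥A ≃ ↥B, cost G f = MstarTS G A B ∧ ∀ a : ↥A, (a : V) ∈ B → ((f a : V) = a) := by
  classical
  set M := MstarTS G A B with hM
  let k : (↥A ≃ ↥B) → ℕ := fun f =>
    (Finset.univ.filter (fun a : ↥A => (a : V) ∈ B ∧ (f a : V) ≠ a)).card
  have hne : {n | ∃ f : ↥A ≃ ↥B, cost G f = M ∧ k f = n}.Nonempty := by
    obtain ⟨f, hf⟩ := exists_cost_eq_mstar G h
    exact ⟨k f, f, hf, rfl⟩
  obtain ⟨f, hfc, hfk⟩ := Nat.sInf_mem hne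
  by_cases h0 : k f = 0
  · refine ⟨f, hfc, ?_⟩
    intro a haB
    by_contra hne2
    have : a ∈ Finset.univ.filter (fun a : ↥A => (a : V) ∈ B ∧ (f a : V) ≠ a) := by
      simp [haB, hne2]
    rw [Finset.card_eq_zero.1 h0] at this
    exact absurd this (Finset.notMem_empty a)
  · exfalso
    -- pick a bad point and improve
    obtain ⟨a, ha⟩ := Finset.card_pos.1 (Nat.pos_of_ne_zero h0)
    simp only [Finset.mem_filter, Finset.mem_univ, true_and] at ha
    obtain ⟨haB, hfa⟩ := ha
    set b : ↥A := f.symm ⟨(a : V), haB⟩ with hb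
    have hfb : (f b : V) = a := by rw [hb, Equiv.apply_symm_apply]
    have hba : b ≠ a := by
      intro hc
      rw [hc] at hfb
      exact hfa hfb
    have hbav : (b : V) ≠ (a : V) := fun hc => hba (Subtype.ext hc)
    set f₂ := swapEquiv f a b with hf₂
    have htri : G.dist (b : V) (f a : V) ≤ G.dist (b : V) (a : V)
        + G.dist (a : V) (f a : V) := hconn.dist_triangle
    have hd0 : G.dist (a : V) (f b : V) = 0 := by rw [hfb, SimpleGraph.dist_self]
    have hdb : G.dist (b : V) (f b : V) = G.dist (b : V) (a : V) := by rw [hfb]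
    have hle : cost G f₂ ≤ cost G f := by
      have key := cost_swapEquiv G f a b hba.symm
      rw [← hf₂] at key
      omega
    have hge : M ≤ cost G f₂ := hM ▸ mstar_le_cost G f₂
    have hopt2 : cost G f₂ = M := le_antisymm (hfc ▸ hle) hge
    have hsub : Finset.univ.filter (fun c : ↥A => (c : V) ∈ B ∧ (f₂ c : V) ≠ c)
        ⊆ (Finset.univ.filter (fun c : ↥A => (c : V) ∈ B ∧ (f c : V) ≠ c)).erase a := by
      intro c hc
      simp only [Finset.mem_filter, Finset.mem_univ, true_and] at hc
      obtain ⟨hcB, hc2⟩ := hc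
      have hca : c ≠ a := by
        intro hc3
        rw [hc3] at hc2
        rw [hf₂] at hc2
        rw [swapEquiv_apply_left] at hc2
        exact hc2 hfb
      rw [Finset.mem_erase]
      refine ⟨hca, ?_⟩
      simp only [Finset.mem_filter, Finset.mem_univ, true_and]
      refine ⟨hcB, ?_⟩
      by_cases hcb : c = b
      · rw [hcb, hfb]
        exact hbav.symm
      · rw [hf₂, swapEquiv_apply_of_ne f a b c hca hcb] at hc2
        exact hc2
    have hlt : k f₂ < k f := by
      have h1 : k f₂ ≤ k f - 1 := by
        calc k f₂ ≤ ((Finset.univ.filter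
            (fun c : ↥A => (c : V) ∈ B ∧ (f c : V) ≠ c)).erase a).card :=
              Finset.card_le_card hsub
        _ = k f - 1 := by
              rw [Finset.card_erase_of_mem]
              simp [haB, hfa]
      omega
    have : sInf {n | ∃ f : ↥A ≃ ↥B, cost G f = M ∧ k f = n} ≤ k f₂ :=
      Nat.sInf_le ⟨f₂, hopt2, rfl⟩
    omega

/-- A chain of token slides between distance-2 dominating sets. -/
inductive Chain (G : SimpleGraph V) : Finset V → Finset V → ℕ → Prop
  | nil (A : Finset V) (h : IsDrDS G 2 ↑A) : Chain G A A 0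
  | cons {A' B : Finset V} {q : ℕ} (A : Finset V) (x y : V) (hx : x ∈ A) (hy : y ∉ A)
      (hadj : G.Adj x y) (hA : IsDrDS G 2 ↑A) (hA' : A' = moveSet A x y)
      (hc : Chain G A' B q) : Chain G A B (q + 1)

lemma chain_card {A B : Finset V} {q : ℕ} (hc : Chain G A B q) : A.card = B.card := by
  induction hc with
  | nil => rfl
  | cons A x y hx hy hadj hA hA' hc ih =>
      rw [← ih, hA', moveSet_card hx hy]

lemma chain_to_seq {A B : Finset V} {q : ℕ} (hc : Chain G A B q) :
    ∃ Dseq : Fin (q + 1) → Finset V, IsTSSeq G 2 q Dseq ∧ Dseq 0 = A ∧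
      Dseq (Fin.last q) = B := by
  induction hc with
  | nil A h =>
      refine ⟨fun _ => A, ⟨fun _ => h, fun i => i.elim0⟩, rfl, rfl⟩
  | @cons A' B q A x y hx hy hadj hA hA' hc ih =>
      obtain ⟨Dseq', ⟨hdom', hmove'⟩, h0', hl'⟩ := ih
      refine ⟨Fin.cons A Dseq', ⟨?_, ?_⟩, ?_, ?_⟩
      · intro i
        induction i using Fin.cases with
        | zero => simpa using hA
        | succ j => simpa using hdom' j
      · intro i
        induction i using Fin.cases with
        | zero =>
            refine ⟨x, ?_, y, ?_, hadj, ?_⟩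
            · simpa using hx
            · simpa using hy
            · simp only [Fin.castSucc_zero, Fin.cons_zero, Fin.cons_succ]
              rw [h0', hA', moveSet_coe hx hy]
        | succ j =>
            obtain ⟨x', hx', y', hy', hadj', heq'⟩ := hmove' j
            refine ⟨x', ?_, y', ?_, hadj', ?_⟩
            · rwa [← Fin.succ_castSucc, Fin.cons_succ]
            · rwa [← Fin.succ_castSucc, Fin.cons_succ]
            · rw [← Fin.succ_castSucc, Fin.cons_succ, Fin.cons_succ]
              exact heq'
      · simp
      · rw [← Fin.succ_last, Fin.cons_succ]
        exact hl'

lemma mstar_le_of_move (hconn : G.Connected) {D0 B : Finset V} {x y : V}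
    (hx : x ∈ D0) (hy : y ∉ D0) (hadj : G.Adj x y)
    (hmB : MstarTS G (moveSet D0 x y) B ∈
      {m | ∃ f : ↥(moveSet D0 x y) ≃ ↥B, m = cost G f}) :
    MstarTS G D0 B ≤ MstarTS G (moveSet D0 x y) B + 1 := by
  classical
  obtain ⟨f₁, hf₁⟩ := hmB
  set e := moveEquiv hx hy with he
  set f₀ := e.trans f₁ with hf₀
  have hxy : G.dist x y = 1 := SimpleGraph.dist_eq_one_iff_adj.2 hadj
  have hc0 : cost G f₀ ≤ cost G f₁ + 1 := by
    have hc1 : cost G f₁ = ∑ a : ↥D0, G.dist ((e a : V)) ((f₁ (e a) : V)) := by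
      unfold cost
      rw [← Equiv.sum_comp e (fun b => G.dist (b : V) ((f₁ b : V)))]
    have hc2 : cost G f₀ = ∑ a : ↥D0, G.dist ((a : V)) ((f₁ (e a) : V)) := by
      unfold cost
      rfl
    rw [hc1, hc2,
      Finset.sum_eq_sum_sdiff_singleton_add (Finset.mem_univ (⟨x, hx⟩ : ↥D0))
        (fun a => G.dist ((a : V)) ((f₁ (e a) : V))),
      Finset.sum_eq_sum_sdiff_singleton_add (Finset.mem_univ (⟨x, hx⟩ : ↥D0))
        (fun a => G.dist ((e a : V)) ((f₁ (e a) : V)))]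
    have h1 : ∀ a ∈ Finset.univ \ {(⟨x, hx⟩ : ↥D0)},
        G.dist ((a : V)) ((f₁ (e a) : V)) = G.dist ((e a : V)) ((f₁ (e a) : V)) := by
      intro a ha
      have : a ≠ ⟨x, hx⟩ := by simpa using (Finset.mem_sdiff.1 ha).2
      have hax : (a : V) ≠ x := fun hc => this (Subtype.ext hc)
      rw [moveEquiv_coe_of_ne hx hy a hax]
    rw [Finset.sum_congr rfl h1]
    have h2 : G.dist ((⟨x, hx⟩ : ↥D0) : V) ((f₁ (e ⟨x, hx⟩) : V))
        ≤ G.dist ((e ⟨x, hx⟩ : V)) ((f₁ (e ⟨x, hx⟩) : V)) + 1 := by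
      have ht : G.dist x ((f₁ (e ⟨x, hx⟩) : V)) ≤ G.dist x y
          + G.dist y ((f₁ (e ⟨x, hx⟩) : V)) := hconn.dist_triangle
      rw [moveEquiv_coe_of_eq hx hy _ rfl]
      simp only
      omega
    omega
  calc MstarTS G D0 B ≤ cost G f₀ := mstar_le_cost G f₀
    _ ≤ cost G f₁ + 1 := hc0
    _ = MstarTS G (moveSet D0 x y) B + 1 := by rw [← hf₁]

lemma seq_lower_bound (hconn : G.Connected) :
    ∀ (q : ℕ) (Dseq : Fin (q + 1) → Finset V), IsTSSeq G 2 q Dseq →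
      MstarTS G (Dseq 0) (Dseq (Fin.last q)) ≤ q ∧
        (Dseq 0).card = (Dseq (Fin.last q)).card := by
  intro q
  induction q with
  | zero =>
      intro Dseq _
      constructor
      · have : cost G (Equiv.refl ↥(Dseq 0)) = 0 := by
          unfold cost
          simp [SimpleGraph.dist_self]
        have h2 := mstar_le_cost G (Equiv.refl ↥(Dseq 0))
        have h3 : Dseq (Fin.last 0) = Dseq 0 := rfl
        rw [h3]
        omega
      · rfl
  | succ q ih =>
      intro Dseq ⟨hdom, hmove⟩
      set T : Fin (q + 1) → Finset V := fun i => Dseq i.succ with hT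
      have hTseq : IsTSSeq G 2 q T := by
        refine ⟨fun i => hdom i.succ, ?_⟩
        intro i
        obtain ⟨x, hx, y, hy, hadj, heq⟩ := hmove i.succ
        refine ⟨x, ?_, y, ?_, hadj, ?_⟩
        · show x ∈ Dseq i.castSucc.succ
          rw [Fin.succ_castSucc]
          exact hx
        · show y ∉ Dseq i.castSucc.succ
          rw [Fin.succ_castSucc]
          exact hy
        · show (↑(Dseq i.succ.succ) : Set V) = ↑(Dseq i.castSucc.succ) \ {x} ∪ {y}
          rw [Fin.succ_castSucc]
          exact heq
      obtain ⟨ihm, ihc⟩ := ih T hTseq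
      have hT0 : T 0 = Dseq (Fin.succ 0) := rfl
      have hTl : T (Fin.last q) = Dseq (Fin.last (q + 1)) := by
        show Dseq (Fin.last q).succ = Dseq (Fin.last (q + 1))
        rw [Fin.succ_last]
      obtain ⟨x, hx, y, hy, hadj, heq⟩ := hmove 0
      have hc0 : (Fin.castSucc (0 : Fin (q + 1))) = (0 : Fin (q + 2)) := rfl
      rw [hc0] at hx hy heq
      have hD1 : Dseq (Fin.succ 0) = moveSet (Dseq 0) x y := by
        apply Finset.coe_injective
        rw [moveSet_coe hx hy]
        exact heq
      have hcard1 : (Dseq 0).card = (Dseq (Fin.succ 0)).card := by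
        rw [hD1, moveSet_card hx hy]
      constructor
      · have hnon : MstarTS G (moveSet (Dseq 0) x y) (Dseq (Fin.last (q + 1))) ∈
            {m | ∃ f : ↥(moveSet (Dseq 0) x y) ≃ ↥(Dseq (Fin.last (q + 1))), m = cost G f} := by
          apply Nat.sInf_mem
          apply costSet_nonempty
          rw [← hD1, ← hTl, ← hT0]
          exact ihc
        have := mstar_le_of_move hconn hx hy hadj hnon
        rw [← hD1] at this
        rw [hT0, hTl] at ihm
        omega
      · rw [hcard1, ← hT0, ← hTl]
        exact ihc

end TSAux
end Part2
section Part3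
namespace TSAux

variable {V : Type*} [DecidableEq V] {G : SimpleGraph V} {K S : Set V}

set_option linter.unusedSectionVars false

section SplitFacts

variable (hpart : K ∪ S = Set.univ) (hdisj : Disjoint K S)
  (hK : G.IsClique K) (hS : ∀ a ∈ S, ∀ b ∈ S, ¬ G.Adj a b)
  (hconn : G.Connected)

include hpart in
lemma mem_K_or_S (v : V) : v ∈ K ∨ v ∈ S := by
  have : v ∈ K ∪ S := hpart ▸ Set.mem_univ v
  exact this

include hdisj in
lemma not_K_and_S {v : V} (h1 : v ∈ K) (h2 : v ∈ S) : False :=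
  Set.disjoint_left.1 hdisj h1 h2

include hK in
lemma clique_adj {u v : V} (hu : u ∈ K) (hv : v ∈ K) (huv : u ≠ v) : G.Adj u v :=
  hK hu hv huv

include hpart hS in
lemma adj_K_of_S {a b : V} (ha : a ∈ S) (hadj : G.Adj a b) : b ∈ K := by
  rcases mem_K_or_S hpart b with h | h
  · exact h
  · exact absurd hadj (hS a ha b h)

include hconn in
lemma exists_nbr [Nontrivial V] (v : V) : ∃ u, G.Adj v u := by
  obtain ⟨w, hwv⟩ := exists_ne v
  obtain ⟨p⟩ := hconn.preconnected v w
  cases p with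
  | nil => exact absurd rfl hwv
  | cons h q => exact ⟨_, h⟩

include hpart hS hconn in
lemma exists_K_nbr [Nontrivial V] {s : V} (hs : s ∈ S) : ∃ k ∈ K, G.Adj s k := by
  obtain ⟨u, hu⟩ := exists_nbr hconn s
  exact ⟨u, adj_K_of_S hpart hS hs hu, hu⟩

include hK in
lemma dist_le_one_of_K {u v : V} (hu : u ∈ K) (hv : v ∈ K) : G.dist u v ≤ 1 := by
  by_cases h : u = v
  · rw [h, SimpleGraph.dist_self]; omega
  · rw [SimpleGraph.dist_eq_one_iff_adj.2 (clique_adj hK hu hv h)]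

include hpart hK hS hconn in
lemma dist_K_le_two [Nontrivial V] {k : V} (hk : k ∈ K) (v : V) : G.dist k v ≤ 2 := by
  rcases mem_K_or_S hpart v with hv | hv
  · have := dist_le_one_of_K hK hk hv
    omega
  · obtain ⟨kv, hkvK, hkvadj⟩ := exists_K_nbr hpart hS hconn hv
    have h1 : G.dist k kv ≤ 1 := dist_le_one_of_K hK hk hkvK
    have h2 : G.dist kv v = 1 := SimpleGraph.dist_eq_one_iff_adj.2 hkvadj.symm
    have := hconn.dist_triangle (u := k) (v := kv) (w := v)
    omega

include hpart hK hS hconn in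
lemma dist_le_three [Nontrivial V] (u v : V) : G.dist u v ≤ 3 := by
  rcases mem_K_or_S hpart u with hu | hu
  · have := dist_K_le_two hpart hK hS hconn hu v
    omega
  · obtain ⟨ku, hkuK, hkuadj⟩ := exists_K_nbr hpart hS hconn hu
    have h1 : G.dist u ku = 1 := SimpleGraph.dist_eq_one_iff_adj.2 hkuadj
    have h2 := dist_K_le_two hpart hK hS hconn hkuK v
    have := hconn.dist_triangle (u := u) (v := ku) (w := v)
    omega

include hpart hK hS hconn in
lemma dom_of_K_mem [Nontrivial V] {D : Finset V} {k : V} (hkD : k ∈ D) (hkK : k ∈ K) :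
    IsDrDS G 2 ↑D := by
  intro v
  exact ⟨k, hkD, hconn.preconnected k v, dist_K_le_two hpart hK hS hconn hkK v⟩

include hpart hK hS hconn in
lemma star_dom [Nontrivial V] {w : V} (hKw : ∀ x ∈ K, x = w) {D : Finset V}
    (hD : D.Nonempty) : IsDrDS G 2 ↑D := by
  obtain ⟨a, ha⟩ := hD
  intro v
  refine ⟨a, ha, hconn.preconnected a v, ?_⟩
  rcases mem_K_or_S hpart a with haK | haS
  · exact dist_K_le_two hpart hK hS hconn haK v
  · obtain ⟨ka, hkaK, hkaadj⟩ := exists_K_nbr hpart hS hconn haS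
    by_cases hav : a = v
    · rw [hav, SimpleGraph.dist_self]; omega
    · rcases mem_K_or_S hpart v with hvK | hvS
      · have : v = w := hKw v hvK
        have : ka = v := (hKw ka hkaK).trans this.symm
        rw [SimpleGraph.dist_eq_one_iff_adj.2 (this ▸ hkaadj)]; omega
      · obtain ⟨kv, hkvK, hkvadj⟩ := exists_K_nbr hpart hS hconn hvS
        have hkk : ka = kv := (hKw ka hkaK).trans (hKw kv hkvK).symm
        have h1 : G.dist a ka = 1 := SimpleGraph.dist_eq_one_iff_adj.2 hkaadj
        have h2 : G.dist ka v = 1 := by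
          rw [hkk]; exact SimpleGraph.dist_eq_one_iff_adj.2 hkvadj.symm
        have := hconn.dist_triangle (u := a) (v := ka) (w := v)
        omega

lemma first_step {u v : V} {n : ℕ} (hd : G.dist u v = n + 1) :
    ∃ y, G.Adj u y ∧ G.dist y v ≤ n := by
  have hr : G.Reachable u v := by
    apply SimpleGraph.Reachable.of_dist_ne_zero
    omega
  obtain ⟨p, hp⟩ := hr.exists_walk_length_eq_dist
  cases p with
  | nil => rw [SimpleGraph.Walk.length_nil] at hp; omega
  | cons h q =>
      rw [SimpleGraph.Walk.length_cons, hd] at hp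
      refine ⟨_, h, ?_⟩
      have := SimpleGraph.dist_le q
      omega

end SplitFacts

end TSAux
end Part3
section Part4
namespace TSAux

variable {V : Type*} [DecidableEq V] {G : SimpleGraph V} {K S : Set V} {Dt : Finset V}

set_option linter.unusedSectionVars false

lemma escape_slide {A : Finset V} (f : ↥A ≃ ↥Dt)
    (hopt : cost G f = MstarTS G A Dt) {a y : V} (ha : a ∈ A) (hy : y ∉ A)
    (hlt : G.dist y (f ⟨a, ha⟩ : V) < G.dist a (f ⟨a, ha⟩ : V)) :
    MstarTS G (moveSet A a y) Dt < MstarTS G A Dt := by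
  have h1 := cost_slideEquiv G f ha hy
  have h2 := mstar_le_cost G (slideEquiv G f ha hy)
  omega

lemma escape_swapslide {A : Finset V} (f : ↥A ≃ ↥Dt) (hopt : cost G f = MstarTS G A Dt)
    {a w y : V} (ha : a ∈ A) (hw : w ∈ A) (haw : a ≠ w) (hy : y ∉ A)
    (hlt : G.dist y (f ⟨a, ha⟩ : V) + G.dist a (f ⟨w, hw⟩ : V)
      < G.dist a (f ⟨a, ha⟩ : V) + G.dist w (f ⟨w, hw⟩ : V)) :
    MstarTS G (moveSet A w y) Dt < MstarTS G A Dt := by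
  set f₁ := swapEquiv f ⟨a, ha⟩ ⟨w, hw⟩ with hf₁
  have hne : (⟨a, ha⟩ : ↥A) ≠ ⟨w, hw⟩ := fun hc => haw (congrArg Subtype.val hc)
  have h1 := cost_swapEquiv G f ⟨a, ha⟩ ⟨w, hw⟩ hne
  rw [← hf₁] at h1
  have e1 : ((⟨a, ha⟩ : ↥A) : V) = a := rfl
  have e2 : ((⟨w, hw⟩ : ↥A) : V) = w := rfl
  rw [e1, e2] at h1
  have h2 := cost_slideEquiv G f₁ hw hy
  have h3 : f₁ ⟨w, hw⟩ = f ⟨a, ha⟩ := swapEquiv_apply_right f _ _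
  rw [h3] at h2
  have h4 := mstar_le_cost G (slideEquiv G f₁ hw hy)
  omega

lemma active_target_notMem {A : Finset V} (f : ↥A ≃ ↥Dt)
    (hnorm : ∀ a : ↥A, (a : V) ∈ Dt → (f a : V) = a) (a : ↥A) (hact : (f a : V) ≠ a) :
    (f a : V) ∉ A := by
  intro hmem
  have h1 : ((f a : V) : V) ∈ Dt := (f a).2
  have h2 : (f ⟨(f a : V), hmem⟩ : V) = (f a : V) := hnorm _ h1
  have h3 : f ⟨(f a : V), hmem⟩ = f a := Subtype.ext h2
  have h4 := f.injective h3
  exact hact (congrArg Subtype.val h4)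

lemma exists_active {A : Finset V} (hcard : A.card = Dt.card) (hne : A ≠ Dt)
    (f : ↥A ≃ ↥Dt) : ∃ a : ↥A, (f a : V) ≠ a := by
  by_contra h
  push_neg at h
  apply hne
  apply Finset.eq_of_subset_of_card_le _ (le_of_eq hcard.symm)
  intro a haA
  have h2 : ((f ⟨a, haA⟩ : ↥Dt) : V) = a := h ⟨a, haA⟩
  exact h2 ▸ (f ⟨a, haA⟩).2

lemma target_eq_moveSet {A : Finset V} (g : ↥A ≃ ↥Dt) {z : V} (hz : z ∈ A)
    (hfix : ∀ a : ↥A, (a : V) ≠ z → (g a : V) = a) :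
    Dt = moveSet A z (g ⟨z, hz⟩ : V) := by
  ext b
  constructor
  · intro hb
    set c := g.symm ⟨b, hb⟩ with hc
    have hgc : (g c : V) = b := by rw [hc, Equiv.apply_symm_apply]
    by_cases hcz : (c : V) = z
    · have hcc : c = ⟨z, hz⟩ := Subtype.ext hcz
      rw [hcc] at hgc
      rw [← hgc]
      exact mem_moveSet_self _ _
    · have hfx := hfix c hcz
      rw [hfx] at hgc
      exact mem_moveSet_of_mem (hgc ▸ c.2) (hgc ▸ hcz)
  · intro hb
    rcases mem_moveSet_elim hb with h | ⟨hbA, hbz⟩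
    · rw [h]; exact (g ⟨z, hz⟩).2
    · have h2 : ((g ⟨b, hbA⟩ : ↥Dt) : V) = b := hfix ⟨b, hbA⟩ hbz
      exact h2 ▸ (g ⟨b, hbA⟩).2

lemma moveSet_moveSet {A : Finset V} {x w t : V} (hw : w ∉ A) :
    moveSet (moveSet A x w) w t = moveSet A x t := by
  unfold moveSet
  rw [Finset.erase_insert (fun hmem => hw (Finset.mem_of_mem_erase hmem))]

lemma self_notMem_moveSet {A : Finset V} {x y : V} (hxy : x ≠ y) : x ∉ moveSet A x y := by
  intro h
  rcases mem_moveSet_elim h with h | h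
  · exact hxy h
  · exact h.2 rfl

variable (hpart : K ∪ S = Set.univ) (hdisj : Disjoint K S)
  (hK : G.IsClique K) (hS : ∀ a ∈ S, ∀ b ∈ S, ¬ G.Adj a b)
  (hconn : G.Connected)

include hpart hdisj hK hS hconn in
lemma chain_through [Nontrivial V] (hDt : IsDrDS G 2 ↑Dt)
    {w z : V} (hwK : w ∈ K) (hzK : z ∈ K) (hzw : z ≠ w) :
    ∀ (n : ℕ) (Act A₁ : Finset V) (g : ↥A₁ ≃ ↥Dt) (hzA : z ∈ A₁),
      Act.card = n → Act ⊆ A₁ → z ∉ Act → w ∉ A₁ →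
      (∀ a : ↥A₁, (a : V) ∉ Act → (a : V) ≠ z → (g a : V) = a) →
      (∀ a : ↥A₁, (a : V) ∈ Act →
        G.Adj (a : V) w ∧ G.Adj w (g a : V) ∧ (g a : V) ∉ A₁ ∧ (g a : V) ∈ S) →
      ((g ⟨z, hzA⟩ : V) = w ∨
        (G.Adj w (g ⟨z, hzA⟩ : V) ∧ (g ⟨z, hzA⟩ : V) ∉ A₁ ∧ (g ⟨z, hzA⟩ : V) ∈ S)) →
      ∃ q, Chain G A₁ Dt q ∧
        ((g ⟨z, hzA⟩ : V) = w → q ≤ 2 * n + 1) ∧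
        ((g ⟨z, hzA⟩ : V) ≠ w → q ≤ 2 * n + 2) := by
  intro n
  induction n with
  | zero =>
      intro Act A₁ g hzA hcard hsub hzAct hwA hfix hact hzcase
      have hActe : Act = ∅ := Finset.card_eq_zero.1 hcard
      subst hActe
      have hfix' : ∀ a : ↥A₁, (a : V) ≠ z → (g a : V) = a := by
        intro a haz
        exact hfix a (by simp) haz
      have hdomA₁ : IsDrDS G 2 ↑A₁ := dom_of_K_mem hpart hK hS hconn hzA hzK
      rcases hzcase with hl | ⟨hadj, hnA, hSmem⟩
      · -- one move: z → w
        have htarget : Dt = moveSet A₁ z w := by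
          have := target_eq_moveSet g hzA hfix'
          rwa [hl] at this
        refine ⟨1, ?_, fun _ => by omega, fun hc => absurd hl hc⟩
        exact Chain.cons A₁ z w hzA hwA (clique_adj hK hzK hwK hzw) hdomA₁ htarget
          (Chain.nil Dt hDt)
      · -- two moves: z → w, w → t₀
        set t₀ := (g ⟨z, hzA⟩ : V) with ht₀
        have htzw : t₀ ≠ w := fun hc => (not_K_and_S hdisj (hc ▸ hwK) hSmem)
        have htarget : Dt = moveSet A₁ z t₀ := target_eq_moveSet g hzA hfix'
        have hA₂ : Dt = moveSet (moveSet A₁ z w) w t₀ := by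
          rw [moveSet_moveSet hwA]; exact htarget
        have hdomA₂ : IsDrDS G 2 ↑(moveSet A₁ z w) :=
          dom_of_K_mem hpart hK hS hconn (mem_moveSet_self z w) hwK
        refine ⟨2, ?_, fun hc => absurd hc htzw, fun _ => by omega⟩
        refine Chain.cons A₁ z w hzA hwA (clique_adj hK hzK hwK hzw) hdomA₁ rfl ?_
        refine Chain.cons _ w t₀ (mem_moveSet_self z w)
          (notMem_moveSet hnA htzw) hadj hdomA₂ hA₂ (Chain.nil Dt hDt)
  | succ n ih =>
      intro Act A₁ g hzA hcard hsub hzAct hwA hfix hact hzcase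
      obtain ⟨a, haAct⟩ := Finset.card_pos.1 (by rw [hcard]; exact Nat.succ_pos n)
      have haA₁ : a ∈ A₁ := hsub haAct
      obtain ⟨haw, hwga, hganA, hgaS⟩ := hact ⟨a, haA₁⟩ haAct
      have haz : a ≠ z := fun hc => hzAct (hc ▸ haAct)
      have hganw : (g ⟨a, haA₁⟩ : V) ≠ w := fun hc => (hwga.ne hc.symm)
      set ga := (g ⟨a, haA₁⟩ : V) with hga
      -- two moves: a → w, then w → ga
      set A₃ := moveSet A₁ a ga with hA₃
      set g₂ := slideEquiv G g haA₁ hganA with hg₂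
      have hzA₃ : z ∈ A₃ := mem_moveSet_of_mem hzA (fun hc => haz hc.symm)
      have hg₂z : (g₂ ⟨z, hzA₃⟩ : V) = (g ⟨z, hzA⟩ : V) := by
        have hne : z ≠ ga := fun hc => hganA (hc ▸ hzA)
        rw [hg₂, slideEquiv_apply_of_ne G g haA₁ hganA ⟨z, hzA₃⟩ hne]
      have hstep := ih (Act.erase a) A₃ g₂ hzA₃
        (by rw [Finset.card_erase_of_mem haAct, hcard]; rfl)
        (by
          intro c hc
          have hcA : c ∈ Act := Finset.mem_of_mem_erase hc
          have hca : c ≠ a := (Finset.mem_erase.1 hc).1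
          exact mem_moveSet_of_mem (hsub hcA) hca)
        (fun hc => hzAct (Finset.mem_of_mem_erase hc))
        (notMem_moveSet hwA (Ne.symm hganw))
        (by
          intro c hcAct hcz
          by_cases hcga : (c : V) = ga
          · rw [hg₂, slideEquiv_apply_of_eq G g haA₁ hganA c hcga, ← hga, hcga]
          · have hcmem := (mem_moveSet_elim c.2).resolve_left hcga
            rw [hg₂, slideEquiv_apply_of_ne G g haA₁ hganA c hcga]
            apply hfix
            · intro hmem
              exact hcAct (Finset.mem_erase.2 ⟨hcmem.2, hmem⟩)
            · exact hcz)
        (by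
          intro c hcAct
          have hcA : (c : V) ∈ Act := Finset.mem_of_mem_erase hcAct
          have hca : (c : V) ≠ a := (Finset.mem_erase.1 hcAct).1
          have hcga : (c : V) ≠ ga := fun hc => hganA (hc ▸ (hsub hcA))
          have hval : (g₂ c : V) = (g ⟨(c : V), hsub hcA⟩ : V) := by
            rw [hg₂, slideEquiv_apply_of_ne G g haA₁ hganA c hcga]
          obtain ⟨h1, h2, h3, h4⟩ := hact ⟨(c : V), hsub hcA⟩ hcA
          refine ⟨h1, by rw [hval]; exact h2, ?_, by rw [hval]; exact h4⟩
          rw [hval]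
          apply notMem_moveSet h3
          intro hc
          have : (⟨(c : V), hsub hcA⟩ : ↥A₁) = ⟨a, haA₁⟩ := by
            apply g.injective
            exact Subtype.ext hc
          exact hca (congrArg Subtype.val this))
        (by
          rw [hg₂z]
          rcases hzcase with hl | ⟨h1, h2, h3⟩
          · exact Or.inl hl
          · refine Or.inr ⟨h1, ?_, h3⟩
            apply notMem_moveSet h2
            intro hc
            have : (⟨z, hzA⟩ : ↥A₁) = ⟨a, haA₁⟩ := by
              apply g.injective
              exact Subtype.ext hc
            exact haz (congrArg Subtype.val this).symm)
      obtain ⟨q₃, hchain₃, hb1, hb2⟩ := hstep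
      rw [hg₂z] at hb1 hb2
      have hdomA₁ : IsDrDS G 2 ↑A₁ := dom_of_K_mem hpart hK hS hconn hzA hzK
      have hdomA₂ : IsDrDS G 2 ↑(moveSet A₁ a w) :=
        dom_of_K_mem hpart hK hS hconn
          (mem_moveSet_of_mem hzA (fun hc => haz hc.symm)) hzK
      have hchain : Chain G A₁ Dt (q₃ + 1 + 1) := by
        refine Chain.cons A₁ a w haA₁ hwA haw hdomA₁ rfl ?_
        refine Chain.cons _ w ga (mem_moveSet_self a w)
          (notMem_moveSet hganA hganw) hwga hdomA₂ ?_ hchain₃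
        rw [hA₃, moveSet_moveSet hwA]
      exact ⟨q₃ + 1 + 1, hchain,
        fun hc => by have := hb1 hc; omega, fun hc => by have := hb2 hc; omega⟩

end TSAux
end Part4
section Part5
namespace TSAux

variable {V : Type*} [DecidableEq V] {G : SimpleGraph V} {K S : Set V} {Dt : Finset V}

set_option linter.unusedSectionVars false

variable (hpart : K ∪ S = Set.univ) (hdisj : Disjoint K S)
  (hK : G.IsClique K) (hS : ∀ a ∈ S, ∀ b ∈ S, ¬ G.Adj a b)
  (hconn : G.Connected)

include hpart hdisj hK hS hconn in
lemma resolve_stuck [Nontrivial V] (hDt : IsDrDS G 2 ↑Dt) {A : Finset V}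
    (hA : IsDrDS G 2 ↑A) (f : ↥A ≃ ↥Dt)
    (hopt : cost G f = MstarTS G A Dt)
    (hnorm : ∀ a : ↥A, (a : V) ∈ Dt → (f a : V) = a)
    {w z : V} (hwA : w ∈ A) (hwK : w ∈ K) (hzK : z ∈ K) (hzw : z ≠ w)
    (huniq : ∀ a ∈ A, a ∈ K → a = w)
    (hact : ∀ a : ↥A, (a : V) ≠ w → (f a : V) ≠ a →
      G.Adj (a : V) w ∧ G.Adj w (f a : V) ∧ (f a : V) ∉ A ∧ (f a : V) ∈ S ∧
        G.dist (a : V) (f a : V) = 2)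
    (hwcase : (f ⟨w, hwA⟩ : V) = w ∨
      (G.Adj w (f ⟨w, hwA⟩ : V) ∧ (f ⟨w, hwA⟩ : V) ∉ A ∧ (f ⟨w, hwA⟩ : V) ∈ S)) :
    ∃ q, Chain G A Dt q ∧ q ≤ MstarTS G A Dt + 2 := by
  classical
  have hzA : z ∉ A := fun hc => hzw (huniq z hc hzK)
  set Act := (A.erase w).filter (fun v => v ∉ Dt) with hAct
  have hActmem : ∀ v, v ∈ Act ↔ (v ∈ A ∧ v ≠ w ∧ v ∉ Dt) := by
    intro v
    rw [hAct, Finset.mem_filter, Finset.mem_erase]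
    tauto
  have hchar : ∀ a : ↥A, ((f a : V) = a ↔ (a : V) ∈ Dt) := by
    intro a
    constructor
    · intro h; rw [← h]; exact (f a).2
    · exact hnorm a
  set g := slideEquiv G f hwA hzA with hg
  have hzA₁ : z ∈ moveSet A w z := mem_moveSet_self w z
  have hgz : (g ⟨z, hzA₁⟩ : V) = (f ⟨w, hwA⟩ : V) :=
    slideEquiv_apply_of_eq G f hwA hzA _ rfl
  have hActsub : Act ⊆ A := fun v hv => ((hActmem v).1 hv).1
  obtain ⟨q₁, hchain₁, hb1, hb2⟩ :=
    chain_through hpart hdisj hK hS hconn hDt hwK hzK hzw Act.card Act (moveSet A w z) g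
      hzA₁ rfl
      (fun v hv => mem_moveSet_of_mem (hActsub hv) ((hActmem v).1 hv).2.1)
      (fun hc => hzA (hActsub hc))
      (self_notMem_moveSet (Ne.symm hzw))
      (by
        intro c hcAct hcz
        have hcmem := (mem_moveSet_elim c.2).resolve_left hcz
        have hval : (g c : V) = (f ⟨(c : V), hcmem.1⟩ : V) := by
          rw [hg, slideEquiv_apply_of_ne G f hwA hzA c hcz]
        rw [hval]
        apply hnorm
        by_contra hc
        exact hcAct ((hActmem _).2 ⟨hcmem.1, hcmem.2, hc⟩)
      )
      (by
        intro c hcAct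
        obtain ⟨hcA, hcw, hcDt⟩ := (hActmem _).1 hcAct
        have hcz : (c : V) ≠ z := fun hc => hzA (hc ▸ hcA)
        have hval : (g c : V) = (f ⟨(c : V), hcA⟩ : V) := by
          rw [hg, slideEquiv_apply_of_ne G f hwA hzA c hcz]
        have hfa : (f ⟨(c : V), hcA⟩ : V) ≠ (c : V) := by
          intro hc
          exact hcDt ((hchar _).1 hc)
        obtain ⟨h1, h2, h3, h4, _⟩ := hact ⟨(c : V), hcA⟩ hcw hfa
        refine ⟨h1, by rw [hval]; exact h2, ?_, by rw [hval]; exact h4⟩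
        rw [hval]
        exact notMem_moveSet h3 (fun hc => not_K_and_S hdisj (show _ ∈ K by rw [hc]; exact hzK) h4)
      )
      (by
        rw [hgz]
        rcases hwcase with hl | ⟨h1, h2, h3⟩
        · exact Or.inl hl
        · exact Or.inr ⟨h1,
            notMem_moveSet h2 (fun hc => not_K_and_S hdisj (show _ ∈ K by rw [hc]; exact hzK) h3), h3⟩
      )
  rw [hgz] at hb1 hb2
  have hchain : Chain G A Dt (q₁ + 1) :=
    Chain.cons A w z hwA hzA (clique_adj hK hwK hzK (Ne.symm hzw)) hA rfl hchain₁
  -- cost computation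
  have hcost : cost G f = 2 * Act.card + G.dist w ((f ⟨w, hwA⟩ : V)) := by
    have hterm : ∀ a : ↥A, G.dist (a : V) ((f a : V))
        = (fun v : V => if v ∈ Act then 2 else
            if v = w then G.dist w ((f ⟨w, hwA⟩ : V)) else 0) (a : V) := by
      intro a
      simp only
      by_cases h1 : (a : V) ∈ Act
      · rw [if_pos h1]
        obtain ⟨haA, haw, haDt⟩ := (hActmem _).1 h1
        have hfa : (f a : V) ≠ (a : V) := fun hc => haDt ((hchar a).1 hc)
        have : a = ⟨(a : V), haA⟩ := Subtype.ext rfl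
        exact (hact a haw hfa).2.2.2.2
      · rw [if_neg h1]
        by_cases h2 : (a : V) = w
        · rw [if_pos h2]
          have hae : a = (⟨w, hwA⟩ : ↥A) := Subtype.ext h2
          rw [hae]
        · rw [if_neg h2]
          have haDt : (a : V) ∈ Dt := by
            by_contra hc
            exact h1 ((hActmem _).2 ⟨a.2, h2, hc⟩)
          rw [(hchar a).2 haDt, SimpleGraph.dist_self]
    unfold cost
    have hcs := Finset.sum_coe_sort A (fun v : V => if v ∈ Act then 2 else
      if v = w then G.dist w ((f ⟨w, hwA⟩ : V)) else 0)
    rw [Finset.sum_congr rfl (fun a _ => hterm a), hcs]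
    rw [Finset.sum_ite]
    have hfilter1 : A.filter (fun v => v ∈ Act) = Act := by
      rw [Finset.filter_mem_eq_inter]
      exact Finset.inter_eq_right.2 hActsub
    rw [hfilter1, Finset.sum_const, smul_eq_mul]
    have hwmem : w ∈ A.filter (fun v => v ∉ Act) := by
      rw [Finset.mem_filter]
      refine ⟨hwA, ?_⟩
      intro hc
      exact ((hActmem w).1 hc).2.1 rfl
    rw [Finset.sum_ite_eq' (A.filter (fun v => v ∉ Act)) w
        (fun _ => G.dist w ((f ⟨w, hwA⟩ : V))), if_pos hwmem]
    ring
  by_cases hfw : (f ⟨w, hwA⟩ : V) = w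
  · have hd0 : G.dist w ((f ⟨w, hwA⟩ : V)) = 0 := by rw [hfw, SimpleGraph.dist_self]
    have := hb1 hfw
    refine ⟨q₁ + 1, hchain, ?_⟩
    omega
  · have hd1 : G.dist w ((f ⟨w, hwA⟩ : V)) = 1 :=
      SimpleGraph.dist_eq_one_iff_adj.2 (hwcase.resolve_left hfw).1
    have := hb2 hfw
    refine ⟨q₁ + 1, hchain, ?_⟩
    omega

end TSAux
end Part5
section Part6
namespace TSAux

variable {V : Type*} [DecidableEq V] {G : SimpleGraph V} {K S : Set V} {Dt : Finset V}

set_option linter.unusedSectionVars false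

/-- A cost-decreasing token slide whose result is still dominating. -/
def GoodStep (G : SimpleGraph V) (Dt A : Finset V) : Prop :=
  ∃ x y, x ∈ A ∧ y ∉ A ∧ G.Adj x y ∧ IsDrDS G 2 ↑(moveSet A x y) ∧
    MstarTS G (moveSet A x y) Dt < MstarTS G A Dt

variable (hpart : K ∪ S = Set.univ) (hdisj : Disjoint K S)
  (hK : G.IsClique K) (hS : ∀ a ∈ S, ∀ b ∈ S, ¬ G.Adj a b)
  (hconn : G.Connected)

include hpart hdisj hK hS hconn in
lemma gen_move [Nontrivial V] {A : Finset V} (f : ↥A ≃ ↥Dt)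
    (hopt : cost G f = MstarTS G A Dt)
    (hnorm : ∀ a : ↥A, (a : V) ∈ Dt → (f a : V) = a)
    (a : ↥A) (hact : (f a : V) ≠ a) :
    ∃ x y, x ∈ A ∧ y ∉ A ∧ G.Adj x y ∧
      MstarTS G (moveSet A x y) Dt < MstarTS G A Dt := by
  classical
  set t := (f a : V) with ht
  have htA : t ∉ A := active_target_notMem f hnorm a hact
  have hta : (a : V) ≠ t := fun hc => hact hc.symm
  have hd1 : 1 ≤ G.dist (a : V) t := hconn.pos_dist_of_ne hta
  have hd3 : G.dist (a : V) t ≤ 3 := dist_le_three hpart hK hS hconn _ _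
  have hdt0 : G.dist t t = 0 := SimpleGraph.dist_self
  rcases (show G.dist (a : V) t = 1 ∨ G.dist (a : V) t = 2 ∨ G.dist (a : V) t = 3 by
    omega) with hd | hd | hd
  · -- distance 1 : slide a → t
    have hadj : G.Adj (a : V) t := SimpleGraph.dist_eq_one_iff_adj.1 hd
    exact ⟨(a : V), t, a.2, htA, hadj,
      escape_slide f hopt a.2 htA (by rw [← ht]; omega)⟩
  · -- distance 2
    obtain ⟨y, hadj, hyt⟩ := first_step (n := 1) hd
    by_cases hyA : y ∈ A
    · -- swap-slide : move the token at y to t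
      have hyt1 : G.dist y t = 1 := by
        have h0 : G.dist y t ≠ 0 :=
          fun hc => htA ((hconn.dist_eq_zero_iff.1 hc) ▸ hyA)
        omega
      have hadjyt : G.Adj y t := SimpleGraph.dist_eq_one_iff_adj.1 hyt1
      have hay : (a : V) ≠ y := hadj.ne
      have hday : G.dist (a : V) y = 1 := SimpleGraph.dist_eq_one_iff_adj.2 hadj
      have htri : G.dist (a : V) (f ⟨y, hyA⟩ : V) ≤ G.dist (a : V) y
          + G.dist y (f ⟨y, hyA⟩ : V) := hconn.dist_triangle
      refine ⟨y, t, hyA, htA, hadjyt,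
        escape_swapslide f hopt a.2 hyA hay htA ?_⟩
      rw [← ht]
      omega
    · refine ⟨(a : V), y, a.2, hyA, hadj, escape_slide f hopt a.2 hyA ?_⟩
      rw [← ht]
      omega
  · -- distance 3
    obtain ⟨y, hadj, hyt⟩ := first_step (n := 2) hd
    by_cases hyA : y ∈ A
    · have hday : G.dist (a : V) y = 1 := SimpleGraph.dist_eq_one_iff_adj.2 hadj
      have hay : (a : V) ≠ y := hadj.ne
      have hyt2 : G.dist y t = 2 := by
        have := hconn.dist_triangle (u := (a : V)) (v := y) (w := t)
        omega
      obtain ⟨u, hadju, hut⟩ := first_step (n := 1) hyt2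
      by_cases huA : u ∈ A
      · -- slide token at u to t
        have hut1 : G.dist u t = 1 := by
          have h0 : G.dist u t ≠ 0 :=
            fun hc => htA ((hconn.dist_eq_zero_iff.1 hc) ▸ huA)
          omega
        have hadjut : G.Adj u t := SimpleGraph.dist_eq_one_iff_adj.1 hut1
        have hau : (a : V) ≠ u := by
          intro hc
          rw [← hc] at hadjut
          have : G.dist (a : V) t = 1 := SimpleGraph.dist_eq_one_iff_adj.2 hadjut
          omega
        have hdau : G.dist (a : V) u ≤ 2 := by
          have h1 := hconn.dist_triangle (u := (a : V)) (v := y) (w := u)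
          have h2 : G.dist y u = 1 := SimpleGraph.dist_eq_one_iff_adj.2 hadju
          omega
        have htri : G.dist (a : V) (f ⟨u, huA⟩ : V) ≤ G.dist (a : V) u
            + G.dist u (f ⟨u, huA⟩ : V) := hconn.dist_triangle
        refine ⟨u, t, huA, htA, hadjut,
          escape_swapslide f hopt a.2 huA hau htA ?_⟩
        rw [← ht]
        omega
      · -- slide token at y to u
        have htri : G.dist (a : V) (f ⟨y, hyA⟩ : V) ≤ G.dist (a : V) y
            + G.dist y (f ⟨y, hyA⟩ : V) := hconn.dist_triangle
        refine ⟨y, u, hyA, huA, hadju,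
          escape_swapslide f hopt a.2 hyA hay huA ?_⟩
        rw [← ht]
        omega
    · refine ⟨(a : V), y, a.2, hyA, hadj, escape_slide f hopt a.2 hyA ?_⟩
      rw [← ht]
      omega

include hpart hdisj hK hS hconn in
lemma per_active [Nontrivial V] {A : Finset V} (f : ↥A ≃ ↥Dt)
    (hopt : cost G f = MstarTS G A Dt)
    (hnorm : ∀ a : ↥A, (a : V) ∈ Dt → (f a : V) = a)
    {w : V} (hwA : w ∈ A) (hwK : w ∈ K)
    (huniq : ∀ v ∈ A, v ∈ K → v = w)
    (a : ↥A) (hact : (f a : V) ≠ a) :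
    GoodStep G Dt A ∨
      (((a : V) = w → G.Adj w (f a : V) ∧ (f a : V) ∈ S) ∧
       ((a : V) ≠ w → (f a : V) ∈ S ∧ G.Adj (a : V) w ∧ G.Adj w (f a : V) ∧
          G.dist (a : V) (f a : V) = 2)) := by
  classical
  set t := (f a : V) with ht
  have htA : t ∉ A := active_target_notMem f hnorm a hact
  have hta : (a : V) ≠ t := fun hc => hact hc.symm
  have hd1 : 1 ≤ G.dist (a : V) t := hconn.pos_dist_of_ne hta
  have hdt0 : G.dist t t = 0 := SimpleGraph.dist_self
  by_cases haw : (a : V) = w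
  · -- the active token is the clique token w
    rcases mem_K_or_S hpart t with htK | htS
    · -- target in K : slide w → t directly
      have hadj : G.Adj (a : V) t := clique_adj hK (haw ▸ hwK) htK hta
      refine Or.inl ⟨(a : V), t, a.2, htA, hadj, ?_, ?_⟩
      · exact dom_of_K_mem hpart hK hS hconn (mem_moveSet_self _ _) htK
      · exact escape_slide f hopt a.2 htA (by rw [← ht]; omega)
    · by_cases hadj : G.Adj (a : V) t
      · exact Or.inr ⟨fun _ => ⟨haw ▸ hadj, htS⟩, fun hc => absurd haw hc⟩
      · -- dist = 2, go to a middle clique vertex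
        have hd2 : G.dist (a : V) t = 2 := by
          have hne1 : G.dist (a : V) t ≠ 1 :=
            fun hc => hadj (SimpleGraph.dist_eq_one_iff_adj.1 hc)
          have hle2 : G.dist (a : V) t ≤ 2 :=
            dist_K_le_two hpart hK hS hconn (haw ▸ hwK) t
          omega
        obtain ⟨y, hadjy, hyt⟩ := first_step (n := 1) hd2
        have hynt : y ≠ t := by
          intro hc
          exact hadj (hc ▸ hadjy)
        have hyt1 : G.dist y t = 1 := by
          have h0 : G.dist y t ≠ 0 := fun hc => hynt (hconn.dist_eq_zero_iff.1 hc)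
          omega
        have hadjyt : G.Adj y t := SimpleGraph.dist_eq_one_iff_adj.1 hyt1
        have hyK : y ∈ K := adj_K_of_S hpart hS htS hadjyt.symm
        have hyA : y ∉ A := by
          intro hyA
          have : y = w := huniq y hyA hyK
          rw [this, ← haw] at hadjy
          exact hadjy.ne rfl
        refine Or.inl ⟨(a : V), y, a.2, hyA, hadjy, ?_, ?_⟩
        · exact dom_of_K_mem hpart hK hS hconn (mem_moveSet_self _ _) hyK
        · exact escape_slide f hopt a.2 hyA (by rw [← ht]; omega)
  · -- the active token is in S
    have haS : (a : V) ∈ S := by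
      rcases mem_K_or_S hpart (a : V) with h | h
      · exact absurd (huniq _ a.2 h) haw
      · exact h
    rcases mem_K_or_S hpart t with htK | htS
    · -- target in K
      by_cases hd : G.dist (a : V) t = 1
      · have hadj : G.Adj (a : V) t := SimpleGraph.dist_eq_one_iff_adj.1 hd
        refine Or.inl ⟨(a : V), t, a.2, htA, hadj, ?_, ?_⟩
        · exact dom_of_K_mem hpart hK hS hconn (mem_moveSet_self _ _) htK
        · exact escape_slide f hopt a.2 htA (by rw [← ht]; omega)
      · obtain ⟨k, hkK, hadjk⟩ := exists_K_nbr hpart hS hconn haS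
        have hdak : G.dist (a : V) k = 1 := SimpleGraph.dist_eq_one_iff_adj.2 hadjk
        have hdkt : G.dist k t ≤ 1 := dist_le_one_of_K hK hkK htK
        have hd2 : G.dist (a : V) t = 2 := by
          have := hconn.dist_triangle (u := (a : V)) (v := k) (w := t)
          omega
        by_cases hkA : k ∈ A
        · -- k = w ; swap-slide w → t
          have hkw : k = w := huniq k hkA hkK
          have hadjaw : G.Adj (a : V) w := hkw ▸ hadjk
          have hadjwt : G.Adj w t := by
            apply clique_adj hK hwK htK
            intro hc; exact htA (hc ▸ hwA)
          have htri : G.dist (a : V) (f ⟨w, hwA⟩ : V) ≤ G.dist (a : V) w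
              + G.dist w (f ⟨w, hwA⟩ : V) := hconn.dist_triangle
          have hdaw : G.dist (a : V) w = 1 := SimpleGraph.dist_eq_one_iff_adj.2 hadjaw
          refine Or.inl ⟨w, t, hwA, htA, hadjwt, ?_, ?_⟩
          · exact dom_of_K_mem hpart hK hS hconn (mem_moveSet_self _ _) htK
          · refine escape_swapslide f hopt a.2 hwA haw htA ?_
            rw [← ht]
            omega
        · refine Or.inl ⟨(a : V), k, a.2, hkA, hadjk, ?_, ?_⟩
          · exact dom_of_K_mem hpart hK hS hconn (mem_moveSet_self _ _) hkK
          · exact escape_slide f hopt a.2 hkA (by rw [← ht]; omega)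
    · -- target in S
      have hnadj : ¬ G.Adj (a : V) t := hS _ haS _ htS
      have hdne1 : G.dist (a : V) t ≠ 1 :=
        fun hc => hnadj (SimpleGraph.dist_eq_one_iff_adj.1 hc)
      have hd3 : G.dist (a : V) t ≤ 3 := dist_le_three hpart hK hS hconn _ _
      by_cases hd2 : G.dist (a : V) t = 2
      · obtain ⟨y, hadjy, hyt⟩ := first_step (n := 1) hd2
        have hynt : y ≠ t := fun hc => hnadj (hc ▸ hadjy)
        have hyt1 : G.dist y t = 1 := by
          have h0 : G.dist y t ≠ 0 := fun hc => hynt (hconn.dist_eq_zero_iff.1 hc)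
          omega
        have hadjyt : G.Adj y t := SimpleGraph.dist_eq_one_iff_adj.1 hyt1
        have hyK : y ∈ K := adj_K_of_S hpart hS haS hadjy
        by_cases hyA : y ∈ A
        · have hyw : y = w := huniq y hyA hyK
          exact Or.inr ⟨fun hc => absurd hc haw,
            fun _ => ⟨htS, hyw ▸ hadjy, hyw ▸ hadjyt, hd2⟩⟩
        · refine Or.inl ⟨(a : V), y, a.2, hyA, hadjy, ?_, ?_⟩
          · exact dom_of_K_mem hpart hK hS hconn (mem_moveSet_self _ _) hyK
          · exact escape_slide f hopt a.2 hyA (by rw [← ht]; omega)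
      · have hd3' : G.dist (a : V) t = 3 := by omega
        obtain ⟨k, hkK, hadjk⟩ := exists_K_nbr hpart hS hconn haS
        have hdak : G.dist (a : V) k = 1 := SimpleGraph.dist_eq_one_iff_adj.2 hadjk
        by_cases hkA : k ∈ A
        · have hkw : k = w := huniq k hkA hkK
          have hadjaw : G.Adj (a : V) w := hkw ▸ hadjk
          have hdaw : G.dist (a : V) w = 1 := SimpleGraph.dist_eq_one_iff_adj.2 hadjaw
          have hdwt2 : G.dist w t = 2 := by
            have h1 := hconn.dist_triangle (u := (a : V)) (v := w) (w := t)
            have h2 : G.dist w t ≤ 2 := dist_K_le_two hpart hK hS hconn hwK t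
            omega
          obtain ⟨y, hadjy, hyt⟩ := first_step (n := 1) hdwt2
          have hynt : y ≠ t := by
            intro hc
            rw [hc] at hadjy
            have : G.dist w t = 1 := SimpleGraph.dist_eq_one_iff_adj.2 hadjy
            omega
          have hyt1 : G.dist y t = 1 := by
            have h0 : G.dist y t ≠ 0 := fun hc => hynt (hconn.dist_eq_zero_iff.1 hc)
            omega
          have hadjyt : G.Adj y t := SimpleGraph.dist_eq_one_iff_adj.1 hyt1
          have hyK : y ∈ K := adj_K_of_S hpart hS htS hadjyt.symm
          have hyA : y ∉ A := by
            intro hyA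
            have : y = w := huniq y hyA hyK
            rw [this] at hadjy
            exact hadjy.ne rfl
          have htri : G.dist (a : V) (f ⟨w, hwA⟩ : V) ≤ G.dist (a : V) w
              + G.dist w (f ⟨w, hwA⟩ : V) := hconn.dist_triangle
          refine Or.inl ⟨w, y, hwA, hyA, hadjy, ?_, ?_⟩
          · exact dom_of_K_mem hpart hK hS hconn (mem_moveSet_self _ _) hyK
          · refine escape_swapslide f hopt a.2 hwA haw hyA ?_
            rw [← ht]
            omega
        · refine Or.inl ⟨(a : V), k, a.2, hkA, hadjk, ?_, ?_⟩
          · exact dom_of_K_mem hpart hK hS hconn (mem_moveSet_self _ _) hkK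
          · refine escape_slide f hopt a.2 hkA ?_
            have : G.dist k t ≤ 2 := dist_K_le_two hpart hK hS hconn hkK t
            rw [← ht]
            omega

include hpart hdisj hK hS hconn in
lemma main_step [Nontrivial V] (hDt : IsDrDS G 2 ↑Dt) {A : Finset V}
    (hA : IsDrDS G 2 ↑A) (hcard : A.card = Dt.card) (hne : A ≠ Dt) :
    GoodStep G Dt A ∨ (∃ q, Chain G A Dt q ∧ q ≤ MstarTS G A Dt + 2) := by
  classical
  obtain ⟨f, hopt, hnorm⟩ := exists_optimal_normalized hconn hcard
  obtain ⟨a₀, ha₀⟩ := exists_active hcard hne f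
  by_cases hKA : ∃ v ∈ A, v ∈ K
  · obtain ⟨w, hwA, hwK⟩ := hKA
    by_cases huniq : ∀ v ∈ A, v ∈ K → v = w
    · by_cases hz : ∃ z ∈ K, z ≠ w
      · obtain ⟨z, hzK, hzw⟩ := hz
        by_cases hall : ∀ a : ↥A, (f a : V) ≠ a →
            (((a : V) = w → G.Adj w (f a : V) ∧ (f a : V) ∈ S) ∧
             ((a : V) ≠ w → (f a : V) ∈ S ∧ G.Adj (a : V) w ∧ G.Adj w (f a : V) ∧
                G.dist (a : V) (f a : V) = 2))
        · refine Or.inr (resolve_stuck hpart hdisj hK hS hconn hDt hA f hopt hnorm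
            hwA hwK hzK hzw huniq ?_ ?_)
          · intro a hanw hfa
            obtain ⟨hS', hadjaw, hadjwfa, hd2⟩ := (hall a hfa).2 hanw
            exact ⟨hadjaw, hadjwfa, active_target_notMem f hnorm a hfa, hS', hd2⟩
          · by_cases hfw : (f ⟨w, hwA⟩ : V) = w
            · exact Or.inl hfw
            · obtain ⟨hadj, hS'⟩ := (hall ⟨w, hwA⟩ hfw).1 rfl
              exact Or.inr ⟨hadj, active_target_notMem f hnorm ⟨w, hwA⟩ hfw, hS'⟩
        · obtain ⟨a, ha'⟩ := not_forall.1 hall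
          obtain ⟨hfa, hnp⟩ := _root_.not_imp.1 ha'
          rcases per_active hpart hdisj hK hS hconn f hopt hnorm hwA hwK huniq a hfa
            with hgood | hsp
          · exact Or.inl hgood
          · exact absurd hsp hnp
      · -- K ⊆ {w} : star case, every nonempty set dominates
        push_neg at hz
        obtain ⟨x, y, hx, hy, hadj, hlt⟩ :=
          gen_move hpart hdisj hK hS hconn f hopt hnorm a₀ ha₀
        refine Or.inl ⟨x, y, hx, hy, hadj, ?_, hlt⟩
        exact star_dom hpart hK hS hconn hz ⟨y, mem_moveSet_self _ _⟩
    · -- two distinct clique vertices in A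
      push_neg at huniq
      obtain ⟨v, hvA, hvK, hvw⟩ := huniq
      obtain ⟨x, y, hx, hy, hadj, hlt⟩ :=
        gen_move hpart hdisj hK hS hconn f hopt hnorm a₀ ha₀
      refine Or.inl ⟨x, y, hx, hy, hadj, ?_, hlt⟩
      by_cases hxw : x = w
      · exact dom_of_K_mem hpart hK hS hconn
          (mem_moveSet_of_mem hvA (fun hc => hvw (hc.trans hxw))) hvK
      · exact dom_of_K_mem hpart hK hS hconn
          (mem_moveSet_of_mem hwA (fun hc => hxw hc.symm)) hwK
  · -- no clique vertex in A : any first move enters K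
    push_neg at hKA
    have haS : (a₀ : V) ∈ S := by
      rcases mem_K_or_S hpart (a₀ : V) with h | h
      · exact absurd h (hKA _ a₀.2)
      · exact h
    set t := (f a₀ : V) with ht
    have htA : t ∉ A := active_target_notMem f hnorm a₀ ha₀
    have hta : (a₀ : V) ≠ t := fun hc => ha₀ hc.symm
    have hd1 : 1 ≤ G.dist (a₀ : V) t := hconn.pos_dist_of_ne hta
    obtain ⟨n, hn⟩ : ∃ n, G.dist (a₀ : V) t = n + 1 :=
      ⟨G.dist (a₀ : V) t - 1, by omega⟩
    obtain ⟨y, hadjy, hyt⟩ := first_step hn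
    have hyK : y ∈ K := adj_K_of_S hpart hS haS hadjy
    have hyA : y ∉ A := fun hc => hKA y hc hyK
    refine Or.inl ⟨(a₀ : V), y, a₀.2, hyA, hadjy, ?_, ?_⟩
    · exact dom_of_K_mem hpart hK hS hconn (mem_moveSet_self _ _) hyK
    · exact escape_slide f hopt a₀.2 hyA (by rw [← ht]; omega)

end TSAux
end Part6
section Part7
namespace TSAux

variable {V : Type*} [DecidableEq V] {G : SimpleGraph V} {K S : Set V} {Dt : Finset V}

set_option linter.unusedSectionVars false

variable (hpart : K ∪ S = Set.univ) (hdisj : Disjoint K S)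
  (hK : G.IsClique K) (hS : ∀ a ∈ S, ∀ b ∈ S, ¬ G.Adj a b)
  (hconn : G.Connected)

include hpart hdisj hK hS hconn in
lemma upper [Nontrivial V] (hDt : IsDrDS G 2 ↑Dt) :
    ∀ (n : ℕ) (A : Finset V), IsDrDS G 2 ↑A → A.card = Dt.card → MstarTS G A Dt = n →
      ∃ q, Chain G A Dt q ∧ q ≤ n + 2 := by
  intro n
  induction n using Nat.strong_induction_on with
  | _ n ih =>
    intro A hA hcard hM
    by_cases heq : A = Dt
    · subst heq
      exact ⟨0, Chain.nil A hA, by omega⟩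
    · rcases main_step hpart hdisj hK hS hconn hDt hA hcard heq with
        ⟨x, y, hx, hy, hadj, hdom', hlt⟩ | ⟨q, hchain, hq⟩
      · rw [hM] at hlt
        obtain ⟨q', hchain', hq'⟩ := ih (MstarTS G (moveSet A x y) Dt) hlt
          (moveSet A x y) hdom' (by rw [moveSet_card hx hy, hcard]) rfl
        exact ⟨q' + 1, Chain.cons A x y hx hy hadj hA rfl hchain', by omega⟩
      · rw [hM] at hq
        exact ⟨q, hchain, hq⟩

end TSAux
end Part7

theorem stmt6 {V : Type*} [Fintype V] (G : SimpleGraph V) (K S : Set V)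
    (hpart : K ∪ S = Set.univ) (hdisj : Disjoint K S)
    (hK : G.IsClique K) (hS : ∀ a ∈ S, ∀ b ∈ S, ¬ G.Adj a b)
    (hconn : G.Connected)
    (Ds Dt : Finset V) (hDs : IsDrDS G 2 ↑Ds) (hDt : IsDrDS G 2 ↑Dt)
    (hcard : Ds.card = Dt.card) :
    (∀ (q : ℕ) (Dseq : Fin (q + 1) → Finset V), IsTSSeq G 2 q Dseq →
        Dseq 0 = Ds → Dseq (Fin.last q) = Dt → MstarTS G Ds Dt ≤ q) ∧
    (∃ (q : ℕ) (Dseq : Fin (q + 1) → Finset V), IsTSSeq G 2 q Dseq ∧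
        Dseq 0 = Ds ∧ Dseq (Fin.last q) = Dt ∧ q ≤ MstarTS G Ds Dt + 2) := by
  classical
  constructor
  · intro q Dseq hseq h0 hl
    have hlb := TSAux.seq_lower_bound (G := G) hconn q Dseq hseq
    rw [h0, hl] at hlb
    exact hlb.1
  · by_cases hDsDt : Ds = Dt
    · subst hDsDt
      exact ⟨0, fun _ => Ds, ⟨fun _ => hDs, fun i => i.elim0⟩, rfl, rfl, by omega⟩
    · have hnt : Nontrivial V := by
        by_contra h
        rw [not_nontrivial_iff_subsingleton] at h
        apply hDsDt
        ext a
        constructor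
        · intro ha
          have h1 : 0 < Ds.card := Finset.card_pos.2 ⟨a, ha⟩
          have h2 : 0 < Dt.card := by omega
          obtain ⟨b, hb⟩ := Finset.card_pos.1 h2
          rwa [Subsingleton.elim a b]
        · intro ha
          have h1 : 0 < Dt.card := Finset.card_pos.2 ⟨a, ha⟩
          have h2 : 0 < Ds.card := by omega
          obtain ⟨b, hb⟩ := Finset.card_pos.1 h2
          rwa [Subsingleton.elim a b]
      obtain ⟨q, hchain, hq⟩ := TSAux.upper hpart hdisj hK hS hconn hDt
        (MstarTS G Ds Dt) Ds hDs hcard rfl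
      obtain ⟨Dseq, hseq, h0, hl⟩ := TSAux.chain_to_seq hchain
      exact ⟨q, Dseq, hseq, h0, hl, hq⟩
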